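/- Let d₁, d₂ > 0, set d₃ := (d₂/d₁)^{1/2}, and let T ∈ (0, 1]. Suppose φ : [0, T) → ℝ is continuous on [0, T), continuously differentiable on (0, T), and satisfies φ'(t) ≥ d₁ φ(t)² - d₂ for all t ∈ (0, T) and φ(0) ≥ d₃ + 2/d₁. Then T ≤ 1/2. -/

import Mathlib

open Set

theorem stmt8 (d₁ d₂ T : ℝ) (hd₁ : 0 < d₁) (hd₂ : 0 < d₂) (hT : T ∈ Ioc (0:ℝ) 1)
    (φ φ' : ℝ → ℝ)
    (hcont : ContinuousOn φ (Ico 0 T))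
    (hderiv : ∀ t ∈ Ioo 0 T, HasDerivAt φ (φ' t) t)
    (hφ'cont : ContinuousOn φ' (Ioo 0 T))
    (hode : ∀ t ∈ Ioo 0 T, φ' t ≥ d₁ * (φ t) ^ 2 - d₂)
    (hinit : φ 0 ≥ Real.sqrt (d₂ / d₁) + 2 / d₁) :
    T ≤ 1 / 2 := by
  obtain ⟨hT0, hT1⟩ := hT
  obtain ⟨d₃, hd₃def⟩ : ∃ x, x = Real.sqrt (d₂ / d₁) := ⟨_, rfl⟩
  rw [← hd₃def] at hinit
  have hd₃0 : 0 ≤ d₃ := hd₃def ▸ Real.sqrt_nonneg _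
  have hd₃sq : d₁ * d₃ ^ 2 = d₂ := by
    rw [hd₃def, Real.sq_sqrt (le_of_lt (div_pos hd₂ hd₁))]
    field_simp
  obtain ⟨c, hcdef⟩ : ∃ x, x = d₃ + 2 / d₁ := ⟨_, rfl⟩
  rw [← hcdef] at hinit
  -- Step A: φ stays ≥ c on (0, T)
  have stepA : ∀ t ∈ Ioo (0:ℝ) T, φ t ≥ c := by
    intro t ht
    -- first, φ t ≥ c - ε for all small ε
    have key : ∀ ε : ℝ, 0 < ε → ε ≤ 1 / d₁ → c - ε ≤ φ t := by
      intro ε hε hε1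
      -- find s ∈ (0, t) with φ s > c - ε
      have htend : Filter.Tendsto φ (nhdsWithin 0 (Ioi 0)) (nhds (φ 0)) := by
        have h1 : ContinuousWithinAt φ (Ico 0 T) 0 := hcont 0 ⟨le_refl 0, hT0⟩
        have h2 : nhdsWithin (0:ℝ) (Ioo 0 T) = nhdsWithin 0 (Ioi 0) :=
          nhdsWithin_Ioo_eq_nhdsGT hT0
        have := h1.mono (Ioo_subset_Ico_self (a := (0:ℝ)) (b := T))
        rwa [ContinuousWithinAt, h2] at this
      have hev1 : ∀ᶠ x in nhdsWithin (0:ℝ) (Ioi 0), c - ε < φ x := by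
        apply htend.eventually (lt_mem_nhds ?_)
        linarith [hinit]
      have hev2 : ∀ᶠ x in nhdsWithin (0:ℝ) (Ioi 0), x ∈ Ioo 0 t :=
        Ioo_mem_nhdsGT_of_mem ⟨le_refl 0, ht.1⟩
      obtain ⟨s, hs1, hs2⟩ := (hev1.and hev2).exists
      -- barrier lemma on [s, t]
      have hsub : Icc s t ⊆ Ioo 0 T := fun x hx => ⟨lt_of_lt_of_le hs2.1 hx.1,
        lt_of_le_of_lt hx.2 ht.2⟩
      have hbar : ∀ ⦃x⦄, x ∈ Icc s t → (fun y => -φ y) x ≤ (fun _ : ℝ => -(c - ε)) x := by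
        refine image_le_of_deriv_right_lt_deriv_boundary (f := fun y => -φ y)
          (f' := fun y => -φ' y) (B := fun _ => -(c - ε)) (B' := fun _ => 0)
          ?_ ?_ ?_ ?_ ?_
        · exact (hcont.mono (fun x hx => ⟨le_of_lt (hsub hx).1, (hsub hx).2⟩)).neg
        · intro x hx
          exact ((hderiv x (hsub (Ico_subset_Icc_self hx))).neg).hasDerivWithinAt
        · linarith [hs1]
        · intro x
          exact hasDerivAt_const x _
        · intro x hx hfx
          have hφx : φ x = c - ε := by linarith [neg_injective hfx]
          have hode' := hode x (hsub (Ico_subset_Icc_self hx))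
          have h1d : 0 < 1 / d₁ := by positivity
          have h2d : 2 / d₁ = 1 / d₁ + 1 / d₁ := by ring
          have hδ : 1 / d₁ ≤ φ x - d₃ := by rw [hφx, hcdef]; linarith
          have h1 : 1 / d₁ ≤ φ x + d₃ := by linarith
          have h2 : (1 / d₁) * (1 / d₁) ≤ (φ x - d₃) * (φ x + d₃) :=
            mul_le_mul hδ h1 (le_of_lt h1d) (by linarith)
          have h3 : d₁ * ((1 / d₁) * (1 / d₁)) ≤ d₁ * ((φ x - d₃) * (φ x + d₃)) :=
            mul_le_mul_of_nonneg_left h2 hd₁.le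
          have h4 : 0 < d₁ * ((1 / d₁) * (1 / d₁)) := by positivity
          nlinarith [hode', hd₃sq, h3, h4]
      have := hbar (right_mem_Icc.mpr (le_of_lt hs2.2))
      simp only at this
      linarith
    by_contra hcon
    push_neg at hcon
    have h1d : 0 < 1 / d₁ := by positivity
    have hc2 : 0 < (c - φ t) / 2 := by linarith
    have hεpos : 0 < min (1 / d₁) ((c - φ t) / 2) := lt_min h1d hc2
    have := key _ hεpos (min_le_left _ _)
    have := min_le_right (1 / d₁) ((c - φ t) / 2)
    linarith
  -- Step B: every t ∈ (0, T) satisfies t ≤ 1/2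
  have stepB : ∀ t ∈ Ioo (0:ℝ) T, t ≤ 1 / 2 := by
    intro t ht
    have hkey : ∀ s ∈ Ioo (0:ℝ) t, t < 1 / 2 + s := by
      intro s hs
      have hsub : Icc s t ⊆ Ioo 0 T := fun x hx => ⟨lt_of_lt_of_le hs.1 hx.1,
        lt_of_le_of_lt hx.2 ht.2⟩
      have hne : ∀ x ∈ Icc s t, φ x - d₃ ≠ 0 := by
        intro x hx
        have := stepA x (hsub hx)
        have : 2 / d₁ ≤ φ x - d₃ := by
          rw [hcdef] at this; linarith
        have h2d : 0 < 2 / d₁ := by positivity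
        linarith
      have hlb : ∀ x ∈ Icc s t, 2 / d₁ ≤ φ x - d₃ := by
        intro x hx
        have := stepA x (hsub hx)
        simp only [hcdef] at this; linarith
      set h : ℝ → ℝ := fun x => (φ x - d₃)⁻¹ + d₁ * x with hhdef
      have hderivh : ∀ x ∈ Ioo s t, HasDerivAt h (-φ' x / (φ x - d₃) ^ 2 + d₁) x := by
        intro x hx
        have hx' : x ∈ Icc s t := Ioo_subset_Icc_self hx
        have h1 : HasDerivAt (fun y => (φ y - d₃)⁻¹) (-φ' x / (φ x - d₃) ^ 2) x := by
          have := ((hderiv x (hsub hx')).sub_const d₃).inv (hne x hx')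
          exact this
        have h2 : HasDerivAt (fun y => d₁ * y) d₁ x := by
          simpa using (hasDerivAt_id x).const_mul d₁
        exact h1.add h2
      have hanti : AntitoneOn h (Icc s t) := by
        apply antitoneOn_of_deriv_nonpos (convex_Icc s t)
        · apply ContinuousOn.add
          · exact ((hcont.mono (fun x hx => ⟨le_of_lt (hsub hx).1, (hsub hx).2⟩)).sub
              continuousOn_const).inv₀ hne
          · exact (continuous_const.mul continuous_id).continuousOn
        · intro x hx
          rw [interior_Icc] at hx
          exact (hderivh x hx).differentiableAt.differentiableWithinAt
        · intro x hx
          rw [interior_Icc] at hx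
          rw [(hderivh x hx).deriv]
          have hx' : x ∈ Icc s t := Ioo_subset_Icc_self hx
          have hode' := hode x (hsub hx')
          have hlb' := hlb x hx'
          have h2d : 0 < 2 / d₁ := by positivity
          have hq : 0 < (φ x - d₃) ^ 2 := pow_pos (by linarith) 2
          rw [div_add' _ _ _ (ne_of_gt hq), div_nonpos_iff]
          right
          constructor
          · nlinarith
          · linarith
      have := hanti (left_mem_Icc.mpr (le_of_lt hs.2)) (right_mem_Icc.mpr (le_of_lt hs.2))
        (le_of_lt hs.2)
      simp only [hhdef] at this
      have hts : 0 < (φ t - d₃)⁻¹ := by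
        have := hlb t (right_mem_Icc.mpr (le_of_lt hs.2))
        have h2d : 0 < 2 / d₁ := by positivity
        exact inv_pos.mpr (by linarith)
      have hss : (φ s - d₃)⁻¹ ≤ d₁ / 2 := by
        have h1 := hlb s (left_mem_Icc.mpr (le_of_lt hs.2))
        have h2d : 0 < 2 / d₁ := by positivity
        calc (φ s - d₃)⁻¹ ≤ (2 / d₁)⁻¹ := by
              apply inv_anti₀ h2d h1
          _ = d₁ / 2 := by field_simp
      have : d₁ * t < d₁ / 2 + d₁ * s := by linarith
      have := (mul_lt_mul_iff_right₀ hd₁).mp (by linarith : d₁ * t < d₁ * (1 / 2 + s))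
      linarith
    by_contra hcon
    push_neg at hcon
    have hs : (t - 1 / 2) / 2 ∈ Ioo (0:ℝ) t := ⟨by linarith, by linarith⟩
    have := hkey _ hs
    linarith
  by_contra hcon
  push_neg at hcon
  have ht : (1 / 2 + T) / 2 ∈ Ioo (0:ℝ) T := ⟨by linarith, by linarith⟩
  have := stepB _ ht
  linarith
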